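/- Let c : ℕ → ℂ be such that the Dirichlet series Σ c(n) n^{-s} converges absolutely for Re(s) > σ₀, and let α ∈ ℂ with 0 < |α| ≤ 1. Then the twisted Dirichlet series Σ α^{S(n)} c(n) n^{-s} converges absolutely for all s with Re(s) > σ₀ + (3/log 3)·log|α|. -/
import Mathlib


def S (n : ℕ) : ℕ := n.factorization.sum fun p k => k * p

lemma S_mul {a b : ℕ} (ha : a ≠ 0) (hb : b ≠ 0) : S (a * b) = S a + S b := by
  unfold S
  rw [Nat.factorization_mul ha hb]
  exact Finsupp.sum_add_index' (fun p => zero_mul p) (fun p k l => add_mul k l p)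

lemma S_prime {p : ℕ} (hp : p.Prime) : S p = p := by
  unfold S
  rw [hp.factorization, Finsupp.sum_single_index (zero_mul p), one_mul]

lemma log3_gt_one : 1 < Real.log 3 := by
  rw [Real.lt_log_iff_exp_lt (by norm_num)]
  calc Real.exp 1 < 2.7182818286 := Real.exp_one_lt_d9
    _ < 3 := by norm_num

lemma prime_log_bound {p : ℕ} (hp : p.Prime) :
    (3 / Real.log 3) * Real.log p ≤ p := by
  have h3 : (0:ℝ) < Real.log 3 := lt_trans one_pos log3_gt_one
  rw [div_mul_eq_mul_div, div_le_iff₀ h3]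
  -- 3 * log p ≤ p * log 3
  rcases eq_or_lt_of_le hp.two_le with h | h
  · -- p = 2
    have : (p:ℝ) = 2 := by exact_mod_cast h.symm
    rw [this]
    have h8 : (3:ℝ) * Real.log 2 = Real.log 8 := by
      rw [show (8:ℝ) = 2^(3:ℕ) by norm_num, Real.log_pow]; ring
    have h9 : (2:ℝ) * Real.log 3 = Real.log 9 := by
      rw [show (9:ℝ) = 3^(2:ℕ) by norm_num, Real.log_pow]; ring
    rw [h8, h9]
    exact Real.log_le_log (by norm_num) (by norm_num)
  · -- p ≥ 3
    have hp3 : (3:ℝ) ≤ p := by exact_mod_cast h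
    have hx : (0:ℝ) < p := by linarith
    have hlog : Real.log p ≤ Real.log 3 + ((p:ℝ)/3 - 1) := by
      have : Real.log p = Real.log 3 + Real.log ((p:ℝ)/3) := by
        rw [← Real.log_mul (by norm_num) (by positivity)]
        ring_nf
      rw [this]
      have := Real.log_le_sub_one_of_pos (show (0:ℝ) < (p:ℝ)/3 by positivity)
      linarith
    have key : Real.log 3 - 1 ≤ (p:ℝ) * (Real.log 3 - 1) / 3 := by
      have h1 : (0:ℝ) < Real.log 3 - 1 := by linarith [log3_gt_one]
      nlinarith
    nlinarith

lemma log_le_S : ∀ n : ℕ, 1 ≤ n → (3 / Real.log 3) * Real.log n ≤ S n := by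
  intro n
  induction n using Nat.strong_induction_on with
  | _ n ih =>
    intro hn
    rcases eq_or_lt_of_le hn with h | h
    · simp [← h, S]
    · have h2 : 2 ≤ n := h
      set p := n.minFac with hp
      have hpp : p.Prime := Nat.minFac_prime (by omega)
      have hpd : p ∣ n := Nat.minFac_dvd n
      obtain ⟨m, hm⟩ := hpd
      have hm0 : m ≠ 0 := by rintro rfl; omega
      have hm1 : 1 ≤ m := Nat.one_le_iff_ne_zero.mpr hm0
      have hmlt : m < n := by
        have : 2 ≤ p := hpp.two_le
        calc m < p * m := by
              have : 1 * m < p * m :=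
                Nat.mul_lt_mul_of_lt_of_le (by omega) le_rfl (Nat.pos_of_ne_zero hm0)
              simpa using this
          _ = n := hm.symm
      have hS : S n = p + S m := by
        rw [hm, S_mul hpp.ne_zero hm0, S_prime hpp]
      have hlog : Real.log n = Real.log p + Real.log m := by
        rw [hm]
        push_cast
        exact Real.log_mul (by exact_mod_cast hpp.ne_zero) (by exact_mod_cast hm0)
      rw [hS, hlog, mul_add]
      push_cast
      gcongr ?_ + ?_
      · exact prime_log_bound hpp
      · exact ih m hmlt hm1

theorem twisted_dirichlet_series_abs_convergence (c : ℕ → ℂ) (σ₀ : ℝ)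
    (hc : ∀ s : ℂ, σ₀ < s.re →
      Summable fun n : ℕ => ‖c (n + 1) * ((n + 1 : ℕ) : ℂ) ^ (-s)‖)
    (α : ℂ) (hα0 : 0 < ‖α‖) (hα1 : ‖α‖ ≤ 1) :
    ∀ s : ℂ, σ₀ + (3 / Real.log 3) * Real.log ‖α‖ < s.re →
      Summable fun n : ℕ =>
        ‖α ^ S (n + 1) * c (n + 1) * ((n + 1 : ℕ) : ℂ) ^ (-s)‖ := by
  intro s hs
  set t : ℝ := (3 / Real.log 3) * Real.log ‖α‖ with ht
  have hs' : σ₀ < (s - (t:ℂ)).re := by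
    simp [Complex.sub_re]; linarith
  apply Summable.of_nonneg_of_le (fun n => norm_nonneg _) _ (hc (s - t) hs')
  intro n
  set m : ℕ := n + 1 with hmdef
  have hm0 : 0 < m := Nat.succ_pos n
  have hnorm1 : ‖((m:ℕ):ℂ) ^ (-s)‖ = (m:ℝ) ^ (-s.re) := by
    rw [Complex.norm_natCast_cpow_of_pos hm0]
    simp
  have hnorm2 : ‖((m:ℕ):ℂ) ^ (-(s - (t:ℂ)))‖ = (m:ℝ) ^ (-(s.re - t)) := by
    rw [Complex.norm_natCast_cpow_of_pos hm0]
    simp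
  rw [norm_mul, norm_mul, norm_mul, norm_pow, hnorm1, hnorm2]
  have hmR : (1:ℝ) ≤ (m:ℝ) := by exact_mod_cast hm0
  have hkey : ‖α‖ ^ S m ≤ (m:ℝ) ^ t := by
    have hSm := log_le_S m hm0
    have hL : Real.log ‖α‖ ≤ 0 := Real.log_nonpos (le_of_lt hα0) hα1
    rw [← Real.rpow_natCast ‖α‖ (S m), Real.rpow_def_of_pos hα0,
      Real.rpow_def_of_pos (by linarith : (0:ℝ) < (m:ℝ))]
    apply Real.exp_le_exp.mpr
    calc Real.log ‖α‖ * (S m) = (S m : ℝ) * Real.log ‖α‖ := by ring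
      _ ≤ ((3 / Real.log 3) * Real.log m) * Real.log ‖α‖ :=
          mul_le_mul_of_nonpos_right hSm hL
      _ = Real.log m * t := by rw [ht]; ring
  have hfact : (m:ℝ) ^ (-(s.re - t)) = (m:ℝ) ^ t * (m:ℝ) ^ (-s.re) := by
    rw [← Real.rpow_add (by linarith : (0:ℝ) < (m:ℝ))]
    ring_nf
  rw [hfact]
  calc ‖α‖ ^ S m * ‖c m‖ * (m:ℝ) ^ (-s.re)
      ≤ (m:ℝ) ^ t * ‖c m‖ * (m:ℝ) ^ (-s.re) := by
        apply mul_le_mul_of_nonneg_right _ (Real.rpow_nonneg (by linarith) _)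
        exact mul_le_mul_of_nonneg_right hkey (norm_nonneg _)
    _ = ‖c m‖ * ((m:ℝ) ^ t * (m:ℝ) ^ (-s.re)) := by ring
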